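/- Let G' = (V', E') be a finite simple graph and let k ∈ V' satisfy deg_k(G') ≥ deg_u(G') for every u ∈ V'. Then |B_k(G')| ≤ 2·|N_k(G')|. -/

import Mathlib

open scoped Classical

namespace CD

variable {V : Type*}

/-- An open wedge, encoded as a pair `(p, k)` where `p = s(i,j)` is the unordered pair of
endpoint vertices and `k` is the center: `{i,k}` and `{j,k}` are edges and `{i,j}` is not.
Using an unordered pair identifies the wedges `(i,j,k)` and `(j,i,k)`. -/
def IsOpenWedge (G : SimpleGraph V) (w : Sym2 V × V) : Prop :=
  ∃ i j : V, w.1 = s(i, j) ∧ i ≠ j ∧ G.Adj i w.2 ∧ G.Adj j w.2 ∧ ¬ G.Adj i j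

/-- The two edges of a wedge `(s(i,j), k)`, namely `s(i,k)` and `s(j,k)`. -/
def wedgeEdges (w : Sym2 V × V) : Set (Sym2 V) :=
  {e | ∃ x ∈ w.1, e = s(x, w.2)}

/-- The set of open wedges of `G`. -/
def wedgeSet (G : SimpleGraph V) : Set (Sym2 V × V) := {w | IsOpenWedge G w}

/-- `E_W ⊆ E` is an STC labeling if every open wedge has one of its two edges in `E_W`. -/
def IsSTCLabeling (G : SimpleGraph V) (EW : Set (Sym2 V)) : Prop :=
  EW ⊆ G.edgeSet ∧
  ∀ i j k : V, i ≠ j → G.Adj i k → G.Adj j k → ¬ G.Adj i j →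
    s(i, k) ∈ EW ∨ s(j, k) ∈ EW

/-- Minimum size of an STC labeling of `G`. -/
noncomputable def MinSTC (G : SimpleGraph V) : ℕ :=
  sInf {c | ∃ EW : Set (Sym2 V), IsSTCLabeling G EW ∧ EW.ncard = c}

variable [Fintype V] [DecidableEq V]

/-- A clique partition: a partition of the vertex set all of whose parts are cliques in `G`. -/
def IsCliquePartition (G : SimpleGraph V) (C : Finpartition (Finset.univ : Finset V)) : Prop :=
  ∀ P ∈ C.parts, G.IsClique (P : Set V)

/-- An edge crosses the partition iff no part contains both of its endpoints
(equivalently, its endpoints lie in different parts). -/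
def Crosses (C : Finpartition (Finset.univ : Finset V)) (e : Sym2 V) : Prop :=
  ¬ ∃ P ∈ C.parts, ∀ x ∈ e, x ∈ P

/-- The cost of a partition: the number of edges of `G` crossing it. -/
noncomputable def cost (G : SimpleGraph V) (C : Finpartition (Finset.univ : Finset V)) : ℕ :=
  {e | e ∈ G.edgeSet ∧ Crosses C e}.ncard

/-- Optimal cluster deletion value: the minimum cost of a clique partition of `G`. -/
noncomputable def OPTCD (G : SimpleGraph V) : ℕ :=
  sInf {c | ∃ C : Finpartition (Finset.univ : Finset V), IsCliquePartition G C ∧ cost G C = c}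

/-- `B_k(G)`: edges `{i,j} ∈ E` with `i, j ≠ k`, `{i,k} ∈ E` and `{j,k} ∉ E`. -/
def Bset (G : SimpleGraph V) (k : V) : Set (Sym2 V) :=
  {e | ∃ i j : V, e = s(i, j) ∧ G.Adj i j ∧ j ≠ k ∧ G.Adj i k ∧ ¬ G.Adj j k}

/-- `N_k(G)`: unordered pairs `{i,j}` of distinct vertices with `{i,k}, {j,k} ∈ E`
and `{i,j} ∉ E`. -/
def Nset (G : SimpleGraph V) (k : V) : Set (Sym2 V) :=
  {e | ∃ i j : V, e = s(i, j) ∧ i ≠ j ∧ ¬ G.Adj i j ∧ G.Adj i k ∧ G.Adj j k}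

/-- Feasibility for the STC LP relaxation: variables are nonnegative on edges and for every
open wedge `(i,j,k)` centered at `k` we have `x_{ik} + x_{jk} ≥ 1`. -/
def LPFeasible (G : SimpleGraph V) (x : Sym2 V → ℚ) : Prop :=
  (∀ e ∈ G.edgeSet, 0 ≤ x e) ∧
  ∀ i j k : V, i ≠ j → G.Adj i k → G.Adj j k → ¬ G.Adj i j →
    1 ≤ x s(i, k) + x s(j, k)

/-- A solution is half-integral if every edge variable lies in `{0, 1/2, 1}`. -/
def HalfIntegral (G : SimpleGraph V) (x : Sym2 V → ℚ) : Prop :=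
  ∀ e ∈ G.edgeSet, x e = 0 ∨ x e = 1 / 2 ∨ x e = 1

/-- Feasibility for the program (IP2): binary variables `y_e, z_e` on edges, and for every
open wedge `(i,j,k)` centered at `k`, `z_{ik} ≤ y_{jk}` and `z_{jk} ≤ y_{ik}`. -/
def IP2Feasible (G : SimpleGraph V) (y z : Sym2 V → ℚ) : Prop :=
  (∀ e ∈ G.edgeSet, (y e = 0 ∨ y e = 1) ∧ (z e = 0 ∨ z e = 1)) ∧
  ∀ i j k : V, i ≠ j → G.Adj i k → G.Adj j k → ¬ G.Adj i j →
    z s(i, k) ≤ y s(j, k) ∧ z s(j, k) ≤ y s(i, k)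


private lemma key_count_aux (G' : SimpleGraph V) (k i : V)
    (hdeg : G'.degree i ≤ G'.degree k) (hik : G'.Adj i k) :
    (Finset.univ.filter fun j => G'.Adj i j ∧ j ≠ k ∧ G'.Adj i k ∧ ¬ G'.Adj j k).card ≤
    (Finset.univ.filter fun j => i ≠ j ∧ ¬ G'.Adj i j ∧ G'.Adj i k ∧ G'.Adj j k).card := by
  have hdi : G'.degree i = ∑ j : V, (if G'.Adj i j then (1:ℕ) else 0) := by
    rw [← Finset.card_filter]
    simp [SimpleGraph.degree, SimpleGraph.neighborFinset_eq_filter]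
  have hdk : G'.degree k = ∑ j : V, (if G'.Adj j k then (1:ℕ) else 0) := by
    rw [← Finset.card_filter]
    simp [SimpleGraph.degree, SimpleGraph.neighborFinset_eq_filter, G'.adj_comm]
  have hsum1 : ∑ j : V, (if G'.Adj i j then (1:ℕ) else 0)
      = (∑ j : V, if G'.Adj i j ∧ G'.Adj j k then (1:ℕ) else 0)
        + (∑ j : V, if G'.Adj i j ∧ j ≠ k ∧ G'.Adj i k ∧ ¬ G'.Adj j k then (1:ℕ) else 0)
        + 1 := by
    have h : ∀ j : V, (if G'.Adj i j then (1:ℕ) else 0)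
        = (if G'.Adj i j ∧ G'.Adj j k then (1:ℕ) else 0)
          + (if G'.Adj i j ∧ j ≠ k ∧ G'.Adj i k ∧ ¬ G'.Adj j k then (1:ℕ) else 0)
          + (if j = k then 1 else 0) := by
      intro j
      by_cases h1 : j = k
      · subst h1; simp [hik]
      · by_cases h2 : G'.Adj i j <;> by_cases h3 : G'.Adj j k <;> simp [h1, h2, h3, hik]
    rw [Finset.sum_congr rfl (fun j _ => h j), Finset.sum_add_distrib, Finset.sum_add_distrib]
    simp
  have hsum2 : ∑ j : V, (if G'.Adj j k then (1:ℕ) else 0)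
      = (∑ j : V, if G'.Adj i j ∧ G'.Adj j k then (1:ℕ) else 0)
        + (∑ j : V, if i ≠ j ∧ ¬ G'.Adj i j ∧ G'.Adj i k ∧ G'.Adj j k then (1:ℕ) else 0)
        + 1 := by
    have h : ∀ j : V, (if G'.Adj j k then (1:ℕ) else 0)
        = (if G'.Adj i j ∧ G'.Adj j k then (1:ℕ) else 0)
          + (if i ≠ j ∧ ¬ G'.Adj i j ∧ G'.Adj i k ∧ G'.Adj j k then (1:ℕ) else 0)
          + (if j = i then 1 else 0) := by
      intro j
      by_cases h1 : j = i
      · subst h1; simp [hik]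
      · by_cases h2 : G'.Adj i j <;> by_cases h3 : G'.Adj j k <;>
          simp [h1, h2, h3, hik, Ne.symm h1]
    rw [Finset.sum_congr rfl (fun j _ => h j), Finset.sum_add_distrib, Finset.sum_add_distrib]
    simp
  rw [Finset.card_filter, Finset.card_filter]
  omega

theorem statement_1 (G' : SimpleGraph V) (k : V)
    (hdeg : ∀ u : V, G'.degree u ≤ G'.degree k) :
    (Bset G' k).ncard ≤ 2 * (Nset G' k).ncard := by
  classical
  set f : V × V → Sym2 V := fun p => s(p.1, p.2) with hf
  set Bfin : Finset (V × V) := Finset.univ.filter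
    (fun p => G'.Adj p.1 p.2 ∧ p.2 ≠ k ∧ G'.Adj p.1 k ∧ ¬ G'.Adj p.2 k) with hB
  set Nfin : Finset (V × V) := Finset.univ.filter
    (fun p => p.1 ≠ p.2 ∧ ¬ G'.Adj p.1 p.2 ∧ G'.Adj p.1 k ∧ G'.Adj p.2 k) with hN
  -- Step A : |Bset| = |Bfin|
  have hBset : Bset G' k = ↑(Bfin.image f) := by
    ext e
    simp only [Bset, hB, hf, Set.mem_setOf_eq, Finset.coe_image, Set.mem_image, Finset.mem_coe,
      Finset.mem_filter, Finset.mem_univ, true_and]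
    constructor
    · rintro ⟨i, j, rfl, h⟩; exact ⟨(i, j), h, rfl⟩
    · rintro ⟨⟨i, j⟩, h, rfl⟩; exact ⟨i, j, rfl, h⟩
  have hBcard : (Bset G' k).ncard = Bfin.card := by
    rw [hBset, Set.ncard_coe_finset]
    apply Finset.card_image_of_injOn
    rintro ⟨a, b⟩ hab ⟨c, d⟩ hcd hfe
    simp only [hB, Finset.mem_coe, Finset.mem_filter] at hab hcd
    simp only [hf, Sym2.eq_iff] at hfe
    rcases hfe with ⟨rfl, rfl⟩ | ⟨rfl, rfl⟩
    · rfl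
    · exact absurd hab.2.2.2.1 hcd.2.2.2.2
  -- Step B : |Nfin| = 2 * |Nset|
  have hNset : Nset G' k = ↑(Nfin.image f) := by
    ext e
    simp only [Nset, hN, hf, Set.mem_setOf_eq, Finset.coe_image, Set.mem_image, Finset.mem_coe,
      Finset.mem_filter, Finset.mem_univ, true_and]
    constructor
    · rintro ⟨i, j, rfl, h⟩; exact ⟨(i, j), h, rfl⟩
    · rintro ⟨⟨i, j⟩, h, rfl⟩; exact ⟨i, j, rfl, h⟩
  have hNcard : Nfin.card = 2 * (Nset G' k).ncard := by
    rw [hNset, Set.ncard_coe_finset]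
    rw [Finset.card_eq_sum_card_fiberwise (f := f) (t := Nfin.image f)
      (fun x hx => Finset.mem_image_of_mem f hx)]
    rw [Finset.sum_congr rfl (g := fun _ => 2), Finset.sum_const, smul_eq_mul, mul_comm]
    intro e he
    obtain ⟨⟨a, b⟩, hq, rfl⟩ := Finset.mem_image.mp he
    simp only [hN, Finset.mem_filter, Finset.mem_univ, true_and] at hq
    have hfib : Nfin.filter (fun x => f x = f (a, b)) = {(a, b), (b, a)} := by
      ext ⟨c, d⟩
      simp only [hN, hf, Finset.mem_filter, Finset.mem_univ, true_and, Finset.mem_insert,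
        Finset.mem_singleton, Prod.mk.injEq, Sym2.eq_iff]
      constructor
      · rintro ⟨-, (⟨rfl, rfl⟩ | ⟨rfl, rfl⟩)⟩
        · left; exact ⟨rfl, rfl⟩
        · right; exact ⟨rfl, rfl⟩
      · rintro (⟨rfl, rfl⟩ | ⟨rfl, rfl⟩)
        · exact ⟨hq, Or.inl ⟨rfl, rfl⟩⟩
        · refine ⟨⟨hq.1.symm, fun h => hq.2.1 h.symm, hq.2.2.2, hq.2.2.1⟩, Or.inr ⟨rfl, rfl⟩⟩
    rw [hfib, Finset.card_insert_of_notMem, Finset.card_singleton]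
    simp only [Finset.mem_singleton, Prod.mk.injEq]
    rintro ⟨rfl, -⟩
    exact hq.1 rfl
  -- Step C : |Bfin| ≤ |Nfin|
  have hmain : Bfin.card ≤ Nfin.card := by
    rw [Finset.card_eq_sum_card_fiberwise (f := Prod.fst) (t := Finset.univ)
        (fun x _ => Finset.mem_univ (Prod.fst x)),
      Finset.card_eq_sum_card_fiberwise (f := Prod.fst) (t := Finset.univ)
        (fun x _ => Finset.mem_univ (Prod.fst x))]
    apply Finset.sum_le_sum
    intro i _
    have fib : ∀ (P : V → V → Prop) (s : Finset (V × V)), (∀ p, p ∈ s ↔ P p.1 p.2) →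
        (s.filter fun p => p.1 = i).card = (Finset.univ.filter fun j => P i j).card := by
      intro P s hs
      refine Finset.card_bij (fun p _ => p.2) ?_ ?_ ?_
      · intro p hp
        rw [Finset.mem_filter] at hp
        obtain ⟨hp1, hp2⟩ := hp
        rw [hs] at hp1
        rw [Finset.mem_filter]
        exact ⟨Finset.mem_univ _, hp2 ▸ hp1⟩
      · intro p hp q hq h
        rw [Finset.mem_filter] at hp hq
        exact Prod.ext (hp.2.trans hq.2.symm) h
      · intro j hj
        rw [Finset.mem_filter] at hj
        refine ⟨(i, j), ?_, rfl⟩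
        rw [Finset.mem_filter, hs]
        exact ⟨hj.2, rfl⟩
    rw [fib (fun a b => G'.Adj a b ∧ b ≠ k ∧ G'.Adj a k ∧ ¬ G'.Adj b k) _ (fun p => by simp [hB]),
      fib (fun a b => a ≠ b ∧ ¬ G'.Adj a b ∧ G'.Adj a k ∧ G'.Adj b k) _ (fun p => by simp [hN])]
    by_cases hik : G'.Adj i k
    · convert key_count_aux G' k i (hdeg i) hik using 2
      · rfl
      all_goals exact Finset.filter_congr_decidable ..
    · simp [hik]
  rw [hBcard, ← hNcard]
  exact hmain


end CD
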